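/- Let f(v,u) = Δv²/(v²-u²) and g(v,u) = Δvu/(v²-u²). Suppose operators A(u), B(u) on a vector space satisfy A(v)B(u) = f(v,u)B(u)A(v) + g(u,v)B(v)A(u), mutually commuting B's, and A(u)|Ω⟩ = a(u)|Ω⟩ for a vector |Ω⟩. Then A(u_{n+1}) ∏_{j=1}^n B(u_j)|Ω⟩ = ∑_{i=1}^{n+1} a(u_i) [g(u_i,u_{n+1})/f(u_i,u_{n+1})] ∏_{j≠i, 1≤j≤n+1} f(u_i,u_j) ∏_{j≠i, 1≤j≤n+1} B(u_j)|Ω⟩. -/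

import Mathlib

open scoped BigOperators

/-- Action of the `A`-operator on an off-shell Bethe state.
With `f(v,u) = Δv²/(v²-u²)`, `g(v,u) = Δvu/(v²-u²)` (and using
`g(u_i,u_{n+1})/f(u_i,u_{n+1}) = u_{n+1}/u_i`, valid also in the diagonal term since
`f(u,u)/g(u,u) = 1`), if `A(v)B(u) = f(v,u)B(u)A(v) + g(u,v)B(v)A(u)`, the `B`'s
mutually commute, and `A(u)|Ω⟩ = a(u)|Ω⟩`, then
`A(u_{n+1}) ∏_{j=1}^n B(u_j)|Ω⟩ = ∑_{i=1}^{n+1} a(u_i)(u_{n+1}/u_i) ∏_{j≠i} f(u_i,u_j)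
∏_{j≠i} B(u_j)|Ω⟩`. -/

-- three-point scalar identity
lemma tri_id {K : Type*} [Field K] (Δ x v w : K)
    (hvw : v ^ 2 ≠ w ^ 2) (hxw : x ^ 2 ≠ w ^ 2) (hxv : x ^ 2 ≠ v ^ 2) :
    (Δ * v ^ 2 / (v ^ 2 - w ^ 2)) * (Δ * x * v / (x ^ 2 - v ^ 2))
      + (Δ * w * v / (w ^ 2 - v ^ 2)) * (Δ * x * w / (x ^ 2 - w ^ 2))
      = (Δ * x * v / (x ^ 2 - v ^ 2)) * (Δ * x ^ 2 / (x ^ 2 - w ^ 2)) := by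
  have h1 : v ^ 2 - w ^ 2 ≠ 0 := sub_ne_zero.mpr hvw
  have h2 : x ^ 2 - w ^ 2 ≠ 0 := sub_ne_zero.mpr hxw
  have h3 : x ^ 2 - v ^ 2 ≠ 0 := sub_ne_zero.mpr hxv
  have h4 : w ^ 2 - v ^ 2 ≠ 0 := sub_ne_zero.mpr fun h => hvw h.symm
  field_simp
  ring

lemma key {K V : Type*} [Field K] [AddCommGroup V] [Module K V]
    (Δ : K) (Aop Bop : K → Module.End K V) (a : K → K) (Ω : V)
    (hAB : ∀ v w : K, Aop v * Bop w
      = (Δ * v ^ 2 / (v ^ 2 - w ^ 2)) • (Bop w * Aop v)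
        + (Δ * w * v / (w ^ 2 - v ^ 2)) • (Bop v * Aop w))
    (hBB : ∀ v w : K, Commute (Bop v) (Bop w))
    (heig : ∀ w : K, Aop w Ω = a w • Ω)
    {ι : Type*} [DecidableEq ι] (u : ι → K) :
    ∀ (S : Finset ι) (v : K), (∀ j ∈ S, v ^ 2 ≠ u j ^ 2) →
      (∀ i ∈ S, ∀ j ∈ S, i ≠ j → u i ^ 2 ≠ u j ^ 2) →
    Aop v ((S.noncommProd (fun j => Bop (u j)) (fun i _ j _ _ => hBB (u i) (u j))) Ω)
      = (a v * ∏ j ∈ S, (Δ * v ^ 2 / (v ^ 2 - u j ^ 2))) •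
          ((S.noncommProd (fun j => Bop (u j)) (fun i _ j _ _ => hBB (u i) (u j))) Ω)
        + ∑ i ∈ S,
            (a (u i) * (Δ * u i * v / (u i ^ 2 - v ^ 2)) *
                ∏ j ∈ S.erase i, (Δ * u i ^ 2 / (u i ^ 2 - u j ^ 2))) •
              ((Bop v) (((S.erase i).noncommProd (fun j => Bop (u j))
                  (fun i _ j _ _ => hBB (u i) (u j))) Ω)) := by
  intro S
  induction S using Finset.induction_on with
  | empty =>
      intro v _ _
      erw [Finset.noncommProd_empty]
      simp [heig]
  | @insert k T hk ih =>
      intro v hv hp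
      have hvk : v ^ 2 ≠ u k ^ 2 := hv k (Finset.mem_insert_self k T)
      have hvT : ∀ j ∈ T, v ^ 2 ≠ u j ^ 2 := fun j hj => hv j (Finset.mem_insert_of_mem hj)
      have hpT : ∀ i ∈ T, ∀ j ∈ T, i ≠ j → u i ^ 2 ≠ u j ^ 2 := fun i hi j hj =>
        hp i (Finset.mem_insert_of_mem hi) j (Finset.mem_insert_of_mem hj)
      have hkT : ∀ j ∈ T, u k ^ 2 ≠ u j ^ 2 := fun j hj =>
        hp k (Finset.mem_insert_self k T) j (Finset.mem_insert_of_mem hj)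
          (fun h => hk (h ▸ hj))
      have hcomm : ∀ x : V, Bop (u k) (Bop v x) = Bop v (Bop (u k) x) := fun x => by
        rw [← Module.End.mul_apply, ← Module.End.mul_apply, (hBB (u k) v).eq]
      erw [Finset.noncommProd_insert_of_notMem _ _ _ _ hk]
      set PT := T.noncommProd (fun j => Bop (u j)) (fun i _ j _ _ => hBB (u i) (u j)) with hPT
      have hL : Aop v ((Bop (u k) * PT) Ω) = ((Aop v * Bop (u k)) : Module.End K V) (PT Ω) := rfl
      rw [hL, hAB v (u k)]
      simp only [LinearMap.add_apply, LinearMap.smul_apply, Module.End.mul_apply]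
      rw [ih v hvT hpT, ih (u k) hkT hpT]
      rw [Finset.sum_insert hk, Finset.prod_insert hk, Finset.erase_insert hk]
      have hsum : ∑ i ∈ T,
            (a (u i) * (Δ * u i * v / (u i ^ 2 - v ^ 2)) *
                ∏ j ∈ (insert k T).erase i, (Δ * u i ^ 2 / (u i ^ 2 - u j ^ 2))) •
              ((Bop v) ((((insert k T).erase i).noncommProd (fun j => Bop (u j))
                  (fun i _ j _ _ => hBB (u i) (u j))) Ω))
          = (∑ i ∈ T,
              ((Δ * v ^ 2 / (v ^ 2 - u k ^ 2)) *
                  (a (u i) * (Δ * u i * v / (u i ^ 2 - v ^ 2)) *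
                    ∏ j ∈ T.erase i, (Δ * u i ^ 2 / (u i ^ 2 - u j ^ 2)))) •
                ((Bop (u k)) ((Bop v) (((T.erase i).noncommProd (fun j => Bop (u j))
                    (fun i _ j _ _ => hBB (u i) (u j))) Ω))))
            + ∑ i ∈ T,
              ((Δ * u k * v / (u k ^ 2 - v ^ 2)) *
                  (a (u i) * (Δ * u i * u k / (u i ^ 2 - u k ^ 2)) *
                    ∏ j ∈ T.erase i, (Δ * u i ^ 2 / (u i ^ 2 - u j ^ 2)))) •
                ((Bop v) ((Bop (u k)) (((T.erase i).noncommProd (fun j => Bop (u j))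
                    (fun i _ j _ _ => hBB (u i) (u j))) Ω))) := by
        rw [← Finset.sum_add_distrib]
        refine Finset.sum_congr rfl fun i hi => ?_
        have hik : i ≠ k := fun h => hk (h ▸ hi)
        have hknei : k ∉ T.erase i := fun h => hk (Finset.mem_of_mem_erase h)
        erw [Finset.erase_insert_of_ne hik.symm, Finset.prod_insert hknei,
          Finset.noncommProd_insert_of_notMem _ _ _ _ hknei]
        rw [hcomm]
        rw [Module.End.mul_apply]
        rw [← add_smul]
        congr 1
        have htri := tri_id Δ (u i) v (u k) hvk (hp i (Finset.mem_insert_of_mem hi) k (Finset.mem_insert_self k T) hik)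
          (fun h => hvT i hi h.symm)
        set F := ∏ j ∈ T.erase i, (Δ * u i ^ 2 / (u i ^ 2 - u j ^ 2)) with hF
        linear_combination (-(a (u i) * F)) * htri
      rw [hsum]
      simp only [map_add, map_smul, map_sum, smul_add, smul_smul, Finset.smul_sum]
      module

theorem A_on_off_shell_Bethe {K V : Type*} [Field K] [AddCommGroup V] [Module K V]
    (Δ : K) (Aop Bop : K → Module.End K V) (a : K → K) (Ω : V)
    (hAB : ∀ v w : K, Aop v * Bop w
      = (Δ * v ^ 2 / (v ^ 2 - w ^ 2)) • (Bop w * Aop v)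
        + (Δ * w * v / (w ^ 2 - v ^ 2)) • (Bop v * Aop w))
    (hBB : ∀ v w : K, Commute (Bop v) (Bop w))
    (heig : ∀ w : K, Aop w Ω = a w • Ω)
    (n : ℕ) (u : Fin (n + 1) → K) (hu0 : ∀ i, u i ≠ 0)
    (husq : ∀ i j, i ≠ j → u i ^ 2 ≠ u j ^ 2) :
    (Aop (u (Fin.last n)))
        (((Finset.univ.erase (Fin.last n)).noncommProd (fun j => Bop (u j))
            (fun i _ j _ _ => hBB (u i) (u j))) Ω)
      = ∑ i : Fin (n + 1),
          (a (u i) * (u (Fin.last n) / u i) *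
              ∏ j ∈ Finset.univ.erase i, (Δ * (u i) ^ 2 / ((u i) ^ 2 - (u j) ^ 2))) •
            (((Finset.univ.erase i).noncommProd (fun j => Bop (u j))
                (fun i' _ j' _ _ => hBB (u i') (u j'))) Ω) := by
  classical
  set v := u (Fin.last n) with hvdef
  set S := Finset.univ.erase (Fin.last n) with hSdef
  have hP : ∀ (s t : Finset (Fin (n + 1))) (h : s = t),
      (s.noncommProd (fun j => Bop (u j)) (fun i _ j _ _ => hBB (u i) (u j))) =
      (t.noncommProd (fun j => Bop (u j)) (fun i _ j _ _ => hBB (u i) (u j))) := by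
    intro s t h; subst h; rfl
  have hv : ∀ j ∈ S, v ^ 2 ≠ u j ^ 2 := fun j hj =>
    husq (Fin.last n) j ((Finset.mem_erase.1 hj).1.symm)
  have hpw : ∀ i ∈ S, ∀ j ∈ S, i ≠ j → u i ^ 2 ≠ u j ^ 2 := fun i _ j _ hij => husq i j hij
  rw [key Δ Aop Bop a Ω hAB hBB heig u S v hv hpw]
  rw [← Finset.add_sum_erase _ _ (Finset.mem_univ (Fin.last n))]
  rw [← hSdef]
  congr 1
  · rw [div_self (hu0 (Fin.last n)), mul_one]
  · refine Finset.sum_congr rfl fun i hi => ?_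
    have hil : i ≠ Fin.last n := (Finset.mem_erase.1 hi).1
    have hlast_mem : Fin.last n ∈ Finset.univ.erase i :=
      Finset.mem_erase.2 ⟨hil.symm, Finset.mem_univ _⟩
    have hlni : Fin.last n ∉ S.erase i := fun h =>
      (Finset.mem_erase.1 (Finset.mem_of_mem_erase h)).1 rfl
    have h1 : Finset.univ.erase i = insert (Fin.last n) (S.erase i) := by
      rw [hSdef, Finset.erase_right_comm, Finset.insert_erase hlast_mem]
    rw [hP _ _ h1]
    erw [Finset.noncommProd_insert_of_notMem _ _ _ _ hlni]
    rw [h1, Finset.prod_insert hlni]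
    rw [hP _ _ (rfl : S.erase i = S.erase i)]
    rw [Module.End.mul_apply]
    congr 1
    have hi0 : u i ≠ 0 := hu0 i
    have hd : u i ^ 2 - v ^ 2 ≠ 0 := sub_ne_zero.mpr fun h => hv i hi h.symm
    have hsc : (v / u i) * (Δ * u i ^ 2 / (u i ^ 2 - v ^ 2))
        = Δ * u i * v / (u i ^ 2 - v ^ 2) := by
      field_simp
    linear_combination
      (-(a (u i) * ∏ j ∈ S.erase i, (Δ * u i ^ 2 / (u i ^ 2 - u j ^ 2)))) * hsc
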